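/- Let Γ be a finite simplicial graph whose vertices are labeled by nontrivial cyclic groups, let G_Γ be the associated graph product, and let W_Γ be the right-angled Coxeter group obtained by replacing each vertex group G_v with ℤ/2ℤ, with generator s_v for each vertex v. Then for every g ∈ G_Γ the following hold: (a) if g₁⋯g_k is any reduced word for g with g_i a nontrivial element of the vertex group G_{v_i}, then the element γ(g) := s_{v₁}s_{v₂}⋯s_{v_k} of W_Γ does not depend on the choice of reduced word; and (b) the word s_{v₁}⋯s_{v_k} is reduced in W_Γ, i.e. the word length of γ(g) with respect to the generating set {s_v : v ∈ V} equals k, the reduced length of g. -/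

import Mathlib

open Monoid

namespace ArXiv

universe u uG

variable {V : Type u}

/-- The star of a vertex: the vertex together with its neighbors. -/
def star (Γ : SimpleGraph V) (v : V) : Set V := insert v (Γ.neighborSet v)

/-- `C ⊆ V` is the vertex set of a connected component of the full subgraph of `Γ`
induced on `S`. -/
def IsCompOf (Γ : SimpleGraph V) (S : Set V) (C : Set V) : Prop :=
  ∃ c : (Γ.induce S).ConnectedComponent, C = Subtype.val '' c.supp

/-- `Γ` has a separating intersection of links: there are distinct non-adjacent vertices
`v, w` such that some connected component of `Γ ∖ (lk(v) ∩ lk(w))` contains neither `v`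
nor `w`. -/
def HasSIL (Γ : SimpleGraph V) : Prop :=
  ∃ v w : V, v ≠ w ∧ ¬ Γ.Adj v w ∧
    ∃ C : Set V, IsCompOf Γ ((Γ.neighborSet v ∩ Γ.neighborSet w)ᶜ) C ∧ v ∉ C ∧ w ∉ C

variable (Γ : SimpleGraph V) (G : V → Type uG) [∀ v, Group (G v)]

/-- The commutator relators defining the graph product. -/
def rels : Set (Monoid.CoprodI G) :=
  {x | ∃ (v w : V) (_ : Γ.Adj v w) (g : G v) (h : G w),
    x = CoprodI.of g * CoprodI.of h * (CoprodI.of g)⁻¹ * (CoprodI.of h)⁻¹}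

/-- The graph product of the vertex groups `G v` over the graph `Γ`: the quotient of the
free product by the normal closure of the commutators of adjacent vertex groups. -/
def GraphProduct : Type (max u uG) :=
  Monoid.CoprodI G ⧸ Subgroup.normalClosure (rels Γ G)

instance : Group (GraphProduct Γ G) :=
  inferInstanceAs (Group (Monoid.CoprodI G ⧸ Subgroup.normalClosure (rels Γ G)))

/-- The canonical map from a vertex group into the graph product. -/
def of {v : V} : G v →* GraphProduct Γ G :=
  (QuotientGroup.mk' (Subgroup.normalClosure (rels Γ G))).comp CoprodI.of

theorem of_commute {v w : V} (h : Γ.Adj v w) (g : G v) (k : G w) :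
    Commute (of Γ G g) (of Γ G k) := by
  rw [← commutatorElement_eq_one_iff_commute]
  have hmem : (CoprodI.of g * CoprodI.of k * (CoprodI.of g)⁻¹ * (CoprodI.of k)⁻¹ :
      Monoid.CoprodI G) ∈ Subgroup.normalClosure (rels Γ G) :=
    Subgroup.subset_normalClosure ⟨v, w, h, g, k, rfl⟩
  have h1 : (QuotientGroup.mk' (Subgroup.normalClosure (rels Γ G)))
      (CoprodI.of g * CoprodI.of k * (CoprodI.of g)⁻¹ * (CoprodI.of k)⁻¹) = 1 :=
    (QuotientGroup.eq_one_iff _).mpr hmem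
  simp only [map_mul, map_inv] at h1
  rw [commutatorElement_def]
  exact h1

/-- `π` is the partial conjugation `π_{v,C}`, for vertex groups with chosen generators
`gen`: it conjugates the generators in `C` by (the generator of) `v` and fixes all other
generators. -/
def IsPartialConj (gen : ∀ v, G v) (π : MulAut (GraphProduct Γ G)) (v : V) (C : Set V) :
    Prop :=
  (∀ u ∈ C, ∀ g : G u, π (of Γ G g) = of Γ G (gen v) * of Γ G g * (of Γ G (gen v))⁻¹) ∧
  (∀ u ∉ C, ∀ g : G u, π (of Γ G g) = of Γ G g)

/-- `π` is the partial conjugation `π_{a,C}` by the element `a` of the vertex group `G v`: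
it conjugates the vertex groups in `C` by `a` and fixes all other vertex groups. -/
def IsPartialConjBy {v : V} (a : G v) (π : MulAut (GraphProduct Γ G)) (C : Set V) : Prop :=
  (∀ u ∈ C, ∀ g : G u, π (of Γ G g) = of Γ G a * of Γ G g * (of Γ G a)⁻¹) ∧
  (∀ u ∉ C, ∀ g : G u, π (of Γ G g) = of Γ G g)

/-- The vertex set of the graph `Γ̃`: pairs `p_{v,C}` where `C` is a connected component
of `Γ ∖ st(v)`. -/
def TV : Type u := {p : V × Set V // IsCompOf Γ ((star Γ p.1)ᶜ) p.2}

/-- The graph `Γ̃`: vertices `p_{v,C}` and `p_{w,D}` are joined by an edge unless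
`v, w` are distinct non-adjacent vertices with `v ∈ D` and `w ∈ C`. -/
def tilde : SimpleGraph (TV Γ) where
  Adj p q := p ≠ q ∧
    ¬(p.1.1 ≠ q.1.1 ∧ ¬ Γ.Adj p.1.1 q.1.1 ∧ p.1.1 ∈ q.1.2 ∧ q.1.1 ∈ p.1.2)
  symm := ⟨by
    rintro p q ⟨h1, h2⟩
    exact ⟨h1.symm, fun ⟨a, b, c, d⟩ => h2 ⟨a.symm, fun e => b e.symm, d, c⟩⟩⟩
  loopless := ⟨fun p h => h.1 rfl⟩

/-- The graph product `G_{Γ̃}`, where the vertex `p_{v,C}` is labeled by (a copy of) the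
group `G v`. -/
abbrev TildeProduct : Type (max u uG) :=
  GraphProduct (tilde Γ) (fun p : TV Γ => G p.1.1)

/-- The element `p_v = ∏_C p_{v,C} ∈ G_{Γ̃}`, the product over all connected components
`C` of `Γ ∖ st(v)` (the factors pairwise commute). -/
noncomputable def pvert [Finite V] (gen : ∀ v, G v) (v : V) : TildeProduct Γ G :=
  haveI : Fintype {C : Set V // IsCompOf Γ ((star Γ v)ᶜ) C} := Fintype.ofFinite _
  Finset.noncommProd (Finset.univ : Finset {C : Set V // IsCompOf Γ ((star Γ v)ᶜ) C})
    (fun c => of (tilde Γ) (fun p : TV Γ => G p.1.1) (v := ⟨(v, c.1), c.2⟩) (gen v))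
    (by
      intro a _ b _ hab
      have hadj : (tilde Γ).Adj ⟨(v, a.1), a.2⟩ ⟨(v, b.1), b.2⟩ := by
        refine ⟨fun h => hab (Subtype.ext (congrArg (fun x : TV Γ => x.1.2) h)), ?_⟩
        rintro ⟨hne, -⟩
        exact hne rfl
      exact of_commute (tilde Γ) (fun p : TV Γ => G p.1.1) hadj (gen v) (gen v))

/-- The set `Δ` of vertices adjacent to every other vertex of `Γ`. -/
def Delta (Γ : SimpleGraph V) : Set V := {v | ∀ u, u ≠ v → Γ.Adj v u}

/-- The subgroup of the graph product generated by the vertex groups `G v`, `v ∈ T`. -/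
def vertexSubgroup (T : Set V) : Subgroup (GraphProduct Γ G) :=
  Subgroup.closure {x | ∃ v ∈ T, ∃ g : G v, x = of Γ G g}

/-- `w` is a reduced word for the element `g` of the graph product: a minimal length
expression of `g` as a product of nontrivial elements of vertex groups. -/
def IsReducedWord (g : GraphProduct Γ G) (w : List (Σ v : V, G v)) : Prop :=
  (w.map fun l => of Γ G l.2).prod = g ∧ (∀ l ∈ w, l.2 ≠ 1) ∧
    ∀ w' : List (Σ v : V, G v), (w'.map fun l => of Γ G l.2).prod = g →
      w.length ≤ w'.length


section Machinery
variable (Γ : SimpleGraph V)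

/-- `v` occurs in `L` with all earlier entries adjacent to `v`. -/
def ReachV (v : V) (L : List V) : Prop :=
  ∃ a c, L = a ++ v :: c ∧ ∀ z ∈ a, Γ.Adj z v

def BadV (L : List V) : Prop :=
  ∃ a v b c, L = a ++ v :: (b ++ v :: c) ∧ ∀ z ∈ b, Γ.Adj z v

theorem reachV_nil (v : V) : ¬ ReachV Γ v [] := by
  rintro ⟨a, c, h, -⟩; have := congrArg List.length h; simp at this

theorem reachV_cons {v u : V} {L : List V} :
    ReachV Γ v (u :: L) ↔ u = v ∨ (Γ.Adj u v ∧ ReachV Γ v L) := by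
  constructor
  · rintro ⟨a, c, h, ha⟩
    cases a with
    | nil => left; exact (List.cons.injEq _ _ _ _ ▸ h).1.symm ▸ rfl
    | cons z a' =>
      rw [List.cons_append] at h
      obtain ⟨h1, h2⟩ := List.cons.injEq _ _ _ _ ▸ h
      right
      refine ⟨h1 ▸ ha z (by simp), a', c, h2, fun x hx => ha x (by simp [hx])⟩
  · rintro (rfl | ⟨hadj, a, c, rfl, ha⟩)
    · exact ⟨[], L, rfl, by simp⟩
    · exact ⟨u :: a, c, rfl, by
        rintro z hz
        rcases List.mem_cons.1 hz with rfl | hz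
        · exact hadj
        · exact ha z hz⟩

theorem badV_nil : ¬ BadV Γ [] := by
  rintro ⟨a, v, b, c, h, -⟩; have := congrArg List.length h; simp at this

theorem badV_cons {u : V} {L : List V} :
    BadV Γ (u :: L) ↔ ReachV Γ u L ∨ BadV Γ L := by
  constructor
  · rintro ⟨a, v, b, c, h, hb⟩
    cases a with
    | nil =>
      obtain ⟨h1, h2⟩ := List.cons.injEq _ _ _ _ ▸ h
      left; subst h1; exact ⟨b, c, h2, hb⟩
    | cons z a' =>
      rw [List.cons_append] at h
      obtain ⟨h1, h2⟩ := List.cons.injEq _ _ _ _ ▸ h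
      right; exact ⟨a', v, b, c, h2, hb⟩
  · rintro (⟨b, c, rfl, hb⟩ | ⟨a, v, b, c, rfl, hb⟩)
    · exact ⟨[], u, b, c, rfl, hb⟩
    · exact ⟨u :: a, v, b, c, rfl, hb⟩

theorem reachV_swap {x y t : V} {q : List V} (hxy : Γ.Adj x y) :
    ReachV Γ t (y :: x :: q) → ReachV Γ t (x :: y :: q) := by
  rw [reachV_cons, reachV_cons, reachV_cons, reachV_cons]
  rintro (rfl | ⟨hyt, (rfl | ⟨hxt, hq⟩)⟩)
  · exact Or.inr ⟨hxy, Or.inl rfl⟩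
  · exact Or.inl rfl
  · exact Or.inr ⟨hxt, Or.inr ⟨hyt, hq⟩⟩

/-- `BadV` is invariant under swapping adjacent (in the graph) neighbors. -/
theorem badV_swap {x y : V} {q : List V} (hxy : Γ.Adj x y) (p : List V) :
    BadV Γ (p ++ y :: x :: q) → BadV Γ (p ++ x :: y :: q) := by
  induction p with
  | nil =>
    rw [List.nil_append, List.nil_append]
    intro h
    rw [badV_cons, badV_cons, reachV_cons] at h
    rw [badV_cons, badV_cons, reachV_cons]
    rcases h with (rfl | ⟨-, hq⟩) | (hq | hb)
    · exact (Γ.loopless.irrefl x hxy).elim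
    · exact Or.inr (Or.inl hq)
    · exact Or.inl (Or.inr ⟨Γ.adj_symm hxy, hq⟩)
    · exact Or.inr (Or.inr hb)
  | cons z p ih =>
    rw [List.cons_append, List.cons_append, badV_cons, badV_cons]
    rintro (hr | hb)
    · left
      -- transfer ReachV across the swap
      clear ih
      induction p with
      | nil => exact reachV_swap Γ hxy hr
      | cons z' p' ih' =>
        rw [List.cons_append, reachV_cons] at hr ⊢
        rcases hr with rfl | ⟨ha, hr⟩
        · exact Or.inl rfl
        · exact Or.inr ⟨ha, ih' hr⟩
    · exact Or.inr (ih hb)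

end Machinery

set_option linter.unusedSectionVars false

section Machinery2
variable {Γ : SimpleGraph V} {G : V → Type uG} [∀ v, Group (G v)]

variable (Γ G) in
/-- The product in the graph product of a word of letters. -/
def prodW (w : List (Σ v : V, G v)) : GraphProduct Γ G :=
  (w.map fun l => of Γ G l.2).prod

@[simp] theorem prodW_nil : prodW Γ G ([] : List (Σ v : V, G v)) = 1 := rfl

@[simp] theorem prodW_cons (x : (Σ v : V, G v)) (t : List (Σ v : V, G v)) :
    prodW Γ G (x :: t) = of Γ G x.2 * prodW Γ G t := by
  simp [prodW]

theorem prodW_append (a b : List (Σ v : V, G v)) :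
    prodW Γ G (a ++ b) = prodW Γ G a * prodW Γ G b := by
  simp [prodW]

variable (Γ G) in
/-- A word is reduced if every letter is nontrivial and its vertex word has no
"bad pair": two occurrences of the same vertex with everything in between adjacent
to it. -/
def Red (w : List (Σ v : V, G v)) : Prop :=
  (∀ l ∈ w, l.2 ≠ 1) ∧ ¬ BadV Γ (w.map Sigma.fst)

theorem red_nil : Red Γ G [] := ⟨by simp, badV_nil Γ⟩

theorem red_cons {x : (Σ v : V, G v)} {t : List (Σ v : V, G v)} :
    Red Γ G (x :: t) ↔ x.2 ≠ 1 ∧ ¬ ReachV Γ x.1 (t.map Sigma.fst) ∧ Red Γ G t := by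
  unfold Red
  rw [List.map_cons, badV_cons]
  constructor
  · rintro ⟨h1, h2⟩
    exact ⟨h1 x (by simp), fun hr => h2 (Or.inl hr),
      fun l hl => h1 l (by simp [hl]), fun hb => h2 (Or.inr hb)⟩
  · rintro ⟨h1, h2, h3, h4⟩
    refine ⟨?_, ?_⟩
    · intro l hl
      rcases List.mem_cons.1 hl with rfl | hl
      · exact h1
      · exact h3 l hl
    · rintro (hr | hb)
      · exact h2 hr
      · exact h4 hb

variable (Γ) in
/-- One shuffle: swap two adjacent letters whose vertices are adjacent in `Γ`. -/
def Step (w w' : List (Σ v : V, G v)) : Prop :=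
  ∃ p x y q, Γ.Adj (Sigma.fst x) (Sigma.fst y) ∧
    w = p ++ x :: y :: q ∧ w' = p ++ y :: x :: q

variable (Γ) in
/-- Shuffle equivalence of words. -/
def Equivw (w w' : List (Σ v : V, G v)) : Prop :=
  Relation.ReflTransGen (Step Γ) w w'

theorem Step.symm {w w' : List (Σ v : V, G v)} (h : Step Γ w w') : Step Γ w' w := by
  obtain ⟨p, x, y, q, hadj, h1, h2⟩ := h
  exact ⟨p, y, x, q, Γ.adj_symm hadj, h2, h1⟩

theorem Equivw.refl (w : List (Σ v : V, G v)) : Equivw Γ w w :=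
  Relation.ReflTransGen.refl

theorem Equivw.trans {w₁ w₂ w₃ : List (Σ v : V, G v)} (h1 : Equivw Γ w₁ w₂)
    (h2 : Equivw Γ w₂ w₃) : Equivw Γ w₁ w₃ :=
  Relation.ReflTransGen.trans h1 h2

theorem Equivw.symm {w w' : List (Σ v : V, G v)} (h : Equivw Γ w w') : Equivw Γ w' w := by
  induction h with
  | refl => exact Equivw.refl _
  | tail _ h ih => exact Equivw.trans (Relation.ReflTransGen.single h.symm) ih

theorem Step.equiv {w w' : List (Σ v : V, G v)} (h : Step Γ w w') : Equivw Γ w w' :=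
  Relation.ReflTransGen.single h

theorem step_swap {x y : (Σ v : V, G v)} (hadj : Γ.Adj x.1 y.1)
    (q : List (Σ v : V, G v)) : Step Γ (x :: y :: q) (y :: x :: q) :=
  ⟨[], x, y, q, hadj, rfl, rfl⟩

theorem Step.cons {w w' : List (Σ v : V, G v)} (x : (Σ v : V, G v)) (h : Step Γ w w') :
    Step Γ (x :: w) (x :: w') := by
  obtain ⟨p, a, b, q, hadj, h1, h2⟩ := h
  exact ⟨x :: p, a, b, q, hadj, by simp [h1], by simp [h2]⟩

theorem Equivw.cons {w w' : List (Σ v : V, G v)} (x : (Σ v : V, G v))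
    (h : Equivw Γ w w') : Equivw Γ (x :: w) (x :: w') := by
  induction h with
  | refl => exact Equivw.refl _
  | tail _ h ih => exact ih.trans (h.cons x).equiv

/-- A map into a monoid sending `Γ`-adjacent letters to commuting elements is
invariant under shuffle equivalence of products. -/
theorem Equivw.map_prod_eq {M : Type*} [Monoid M] (F : (Σ v : V, G v) → M)
    (hF : ∀ x y : (Σ v : V, G v), Γ.Adj x.1 y.1 → Commute (F x) (F y))
    {w w' : List (Σ v : V, G v)} (h : Equivw Γ w w') :
    (w.map F).prod = (w'.map F).prod := by
  induction h with
  | refl => rfl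
  | tail _ hst ih =>
    obtain ⟨p, x, y, q, hadj, h1, h2⟩ := hst
    subst h1 h2
    rw [ih]
    simp only [List.map_append, List.map_cons, List.prod_append, List.prod_cons,
      ← mul_assoc]
    have : (p.map F).prod * F x * F y = (p.map F).prod * F y * F x := by
      rw [mul_assoc, (hF x y hadj).eq, ← mul_assoc]
    rw [this]

theorem Equivw.length_eq {w w' : List (Σ v : V, G v)} (h : Equivw Γ w w') :
    w.length = w'.length := by
  induction h with
  | refl => rfl
  | tail _ hst ih =>
    obtain ⟨p, x, y, q, hadj, h1, h2⟩ := hst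
    subst h1 h2; simpa using ih

theorem Equivw.prodW_eq {w w' : List (Σ v : V, G v)} (h : Equivw Γ w w') :
    prodW Γ G w = prodW Γ G w' :=
  h.map_prod_eq _ (fun x y hadj => of_commute Γ G hadj x.2 y.2)

theorem Equivw.mem_iff {w w' : List (Σ v : V, G v)} (h : Equivw Γ w w')
    {l : (Σ v : V, G v)} : l ∈ w ↔ l ∈ w' := by
  induction h with
  | refl => rfl
  | tail _ hst ih =>
    obtain ⟨p, x, y, q, hadj, h1, h2⟩ := hst
    subst h1 h2
    rw [ih]; simp; tauto

/-- `Red` transfers along a shuffle step. -/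
theorem Step.red {w w' : List (Σ v : V, G v)} (h : Step Γ w w') (hr : Red Γ G w) :
    Red Γ G w' := by
  obtain ⟨p, x, y, q, hadj, h1, h2⟩ := h
  subst h1 h2
  obtain ⟨hne, hbad⟩ := hr
  constructor
  · intro l hl; apply hne; simp at hl ⊢; tauto
  · intro hb
    apply hbad
    have := badV_swap Γ hadj (p.map Sigma.fst) (by simpa using hb)
    simpa using this

theorem Equivw.red {w w' : List (Σ v : V, G v)} (h : Equivw Γ w w') (hr : Red Γ G w) :
    Red Γ G w' := by
  induction h with
  | refl => exact hr
  | tail _ hst ih => exact hst.red ih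

end Machinery2

section Machinery3
variable {Γ : SimpleGraph V} {G : V → Type uG} [∀ v, Group (G v)]

variable (Γ) in
open Classical in
/-- Multiply a reduced word on the left by the vertex-group element `g ∈ G v`:
walk past letters adjacent to `v`; merge with a letter at `v` if one is found;
otherwise insert `⟨v, g⟩` (if `g ≠ 1`). -/
noncomputable def act (v : V) (g : G v) : List (Σ u : V, G u) → List (Σ u : V, G u)
  | [] => if g = 1 then [] else [⟨v, g⟩]
  | ⟨u, a⟩ :: t =>
    if h : u = v then
      if g * (h ▸ a) = 1 then t else ⟨v, g * (h ▸ a)⟩ :: t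
    else if Γ.Adj u v then ⟨u, a⟩ :: act v g t
    else if g = 1 then ⟨u, a⟩ :: t else ⟨v, g⟩ :: ⟨u, a⟩ :: t

open Classical in
theorem act_nil (v : V) (g : G v) :
    act Γ v g [] = if g = 1 then [] else [⟨v, g⟩] := rfl

open Classical in
theorem act_cons_eq (v : V) (g : G v) (a : G v) (t : List (Σ u : V, G u)) :
    act Γ v g (⟨v, a⟩ :: t) = if g * a = 1 then t else ⟨v, g * a⟩ :: t := by
  simp [act]

theorem act_cons_adj {v u : V} (g : G v) (a : G u) (t : List (Σ u : V, G u))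
    (hadj : Γ.Adj u v) :
    act Γ v g (⟨u, a⟩ :: t) = ⟨u, a⟩ :: act Γ v g t := by
  have hne : u ≠ v := by rintro rfl; exact Γ.loopless.irrefl _ hadj
  simp [act, hne, hadj]

open Classical in
theorem act_cons_far {v u : V} (g : G v) (a : G u) (t : List (Σ u : V, G u))
    (hne : u ≠ v) (hadj : ¬ Γ.Adj u v) :
    act Γ v g (⟨u, a⟩ :: t) =
      if g = 1 then ⟨u, a⟩ :: t else ⟨v, g⟩ :: ⟨u, a⟩ :: t := by
  simp [act, hne, hadj]

theorem act_one {v : V} {w : List (Σ u : V, G u)} (hw : ∀ l ∈ w, l.2 ≠ 1) :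
    act Γ v (1 : G v) w = w := by
  induction w with
  | nil => simp [act_nil]
  | cons x t ih =>
    obtain ⟨u, a⟩ := x
    by_cases h : u = v
    · subst h
      rw [act_cons_eq, if_neg (by simpa using hw ⟨u, a⟩ (by simp))]
      simp
    · by_cases hadj : Γ.Adj u v
      · rw [act_cons_adj _ _ _ hadj, ih (fun l hl => hw l (by simp [hl]))]
      · rw [act_cons_far _ _ _ h hadj, if_pos rfl]

/-- If `u` is adjacent to `v`, reachability of `u` transfers back along `act v g`. -/
theorem reach_act {v u : V} (hadj : Γ.Adj u v) (g : G v) (t : List (Σ u : V, G u))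
    (h : ReachV Γ u ((act Γ v g t).map Sigma.fst)) :
    ReachV Γ u (t.map Sigma.fst) := by
  have huv : u ≠ v := fun h => Γ.loopless.irrefl v (h ▸ hadj)
  induction t with
  | nil =>
    rw [act_nil] at h
    split_ifs at h with h1
    · exact absurd h (by simpa using reachV_nil Γ u)
    · rcases (reachV_cons Γ).1 (by simpa using h) with rfl | ⟨-, hr⟩
      · exact absurd rfl huv
      · exact absurd hr (reachV_nil Γ u)
  | cons x t ih =>
    obtain ⟨z, a⟩ := x
    by_cases hz : z = v
    · subst hz
      rw [act_cons_eq] at h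
      rw [List.map_cons, reachV_cons]
      split_ifs at h with h1
      · exact Or.inr ⟨Γ.adj_symm hadj, h⟩
      · rcases (reachV_cons Γ).1 (by simpa using h) with rfl | ⟨-, hr⟩
        · exact absurd rfl huv
        · exact Or.inr ⟨Γ.adj_symm hadj, hr⟩
    · by_cases hza : Γ.Adj z v
      · rw [act_cons_adj _ _ _ hza] at h
        rw [List.map_cons, reachV_cons] at h ⊢
        rcases h with rfl | ⟨h1, h2⟩
        · exact Or.inl rfl
        · exact Or.inr ⟨h1, ih h2⟩
      · rw [act_cons_far _ _ _ hz hza] at h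
        split_ifs at h with h1
        · exact h
        · rcases (reachV_cons Γ).1 (by simpa using h) with rfl | ⟨-, hr⟩
          · exact absurd rfl huv
          · exact hr

/-- `act` preserves reducedness. -/
theorem red_act {v : V} (g : G v) {w : List (Σ u : V, G u)} (hw : Red Γ G w) :
    Red Γ G (act Γ v g w) := by
  induction w with
  | nil =>
    rw [act_nil]
    split_ifs with h1
    · exact red_nil
    · exact red_cons.2 ⟨h1, by simpa using reachV_nil Γ v, red_nil⟩
  | cons x t ih =>
    obtain ⟨z, a⟩ := x
    obtain ⟨ha, hre, ht⟩ := red_cons.1 hw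
    by_cases hz : z = v
    · subst hz
      rw [act_cons_eq]
      split_ifs with h1
      · exact ht
      · exact red_cons.2 ⟨h1, hre, ht⟩
    · by_cases hza : Γ.Adj z v
      · rw [act_cons_adj _ _ _ hza]
        exact red_cons.2 ⟨ha, fun hr => hre (reach_act hza g t hr), ih ht⟩
      · rw [act_cons_far _ _ _ hz hza]
        split_ifs with h1
        · exact hw
        · refine red_cons.2 ⟨h1, ?_, hw⟩
          rw [List.map_cons, reachV_cons]
          rintro (rfl | ⟨h2, -⟩)
          · exact hz rfl
          · exact hza h2

/-- If no occurrence of `v` is reachable in `t`, `act v g t` is just insertion of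
`⟨v, g⟩` at the front, up to shuffles. -/
theorem act_insert {v : V} {g : G v} (hg : g ≠ 1) (t : List (Σ u : V, G u))
    (hre : ¬ ReachV Γ v (t.map Sigma.fst)) :
    Equivw Γ (act Γ v g t) (⟨v, g⟩ :: t) := by
  induction t with
  | nil => rw [act_nil, if_neg hg]; exact Equivw.refl _
  | cons x t ih =>
    obtain ⟨z, a⟩ := x
    rw [List.map_cons, reachV_cons] at hre
    push_neg at hre
    by_cases hz : z = v
    · exact absurd hz hre.1
    · by_cases hza : Γ.Adj z v
      · rw [act_cons_adj _ _ _ hza]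
        refine Equivw.trans (Equivw.cons _ (ih (fun h => (hre.2 hza) h))) ?_
        exact (step_swap (x := ⟨z, a⟩) (y := ⟨v, g⟩) hza t).equiv
      · rw [act_cons_far _ _ _ hz hza, if_neg hg]
        exact Equivw.refl _

end Machinery3

section Machinery4
variable {Γ : SimpleGraph V} {G : V → Type uG} [∀ v, Group (G v)]

theorem act_mul {v : V} (g h : G v) {w : List (Σ u : V, G u)} (hw : Red Γ G w) :
    Equivw Γ (act Γ v g (act Γ v h w)) (act Γ v (g * h) w) := by
  classical
  induction w with
  | nil =>
    rw [act_nil]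
    by_cases h1 : h = 1
    · subst h1; simp only [if_pos rfl, mul_one]; exact Equivw.refl _
    · simp only [if_neg h1]
      rw [act_cons_eq, act_nil]
      exact Equivw.refl _
  | cons x t ih =>
    obtain ⟨z, a⟩ := x
    obtain ⟨ha, hre, ht⟩ := red_cons.1 hw
    by_cases hz : z = v
    · subst hz
      rw [act_cons_eq, act_cons_eq]
      by_cases h1 : h * a = 1
      · simp only [if_pos h1]
        have hga : g * h * a = g := by rw [mul_assoc, h1, mul_one]
        rw [hga]
        by_cases hg : g = 1
        · subst hg; simp only [if_pos rfl]
          rw [act_one (fun l hl => ht.1 l hl)]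
          exact Equivw.refl _
        · simp only [if_neg hg]
          exact act_insert hg t hre
      · simp only [if_neg h1]
        rw [act_cons_eq, mul_assoc]
        exact Equivw.refl _
    · by_cases hza : Γ.Adj z v
      · rw [act_cons_adj _ _ _ hza, act_cons_adj _ _ _ hza, act_cons_adj _ _ _ hza]
        exact Equivw.cons _ (ih ht)
      · rw [act_cons_far _ _ _ hz hza]
        by_cases h1 : h = 1
        · subst h1; simp only [if_pos rfl, mul_one]; exact Equivw.refl _
        · simp only [if_neg h1]
          rw [act_cons_eq, act_cons_far _ _ _ hz hza]
          exact Equivw.refl _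

theorem act_comm {v u : V} (hadj : Γ.Adj u v) (g : G u) (h : G v)
    {w : List (Σ x : V, G x)} (hw : Red Γ G w) :
    Equivw Γ (act Γ u g (act Γ v h w)) (act Γ v h (act Γ u g w)) := by
  classical
  have huv : u ≠ v := by rintro rfl; exact Γ.loopless.irrefl _ hadj
  have hvu : Γ.Adj v u := Γ.adj_symm hadj
  induction w with
  | nil =>
    by_cases h1 : h = 1
    · subst h1
      rw [act_one (by simp), act_one (fun l hl => ((red_act g red_nil).1 l hl))]
      exact Equivw.refl _
    · by_cases hg : g = 1
      · subst hg
        rw [act_one (fun l hl => ((red_act h red_nil).1 l hl)), act_one (by simp)]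
        exact Equivw.refl _
      · rw [act_nil, act_nil]
        simp only [if_neg h1, if_neg hg]
        rw [act_cons_adj _ _ _ hvu, act_cons_adj _ _ _ hadj, act_nil, act_nil]
        simp only [if_neg h1, if_neg hg]
        exact Step.equiv (step_swap (x := ⟨v, h⟩) (y := ⟨u, g⟩) hvu [])
  | cons x t ih =>
    obtain ⟨z, a⟩ := x
    obtain ⟨ha, hre, ht⟩ := red_cons.1 hw
    by_cases hz : z = v
    · subst hz
      rw [act_cons_eq, act_cons_adj _ _ _ hvu, act_cons_eq]
      by_cases h1 : h * a = 1
      · simp only [if_pos h1]; exact Equivw.refl _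
      · simp only [if_neg h1]
        rw [act_cons_adj _ _ _ hvu]
        exact Equivw.refl _
    · by_cases hzu : z = u
      · subst hzu
        rw [act_cons_adj _ _ _ hadj, act_cons_eq, act_cons_eq]
        by_cases h1 : g * a = 1
        · simp only [if_pos h1]; exact Equivw.refl _
        · simp only [if_neg h1]
          rw [act_cons_adj _ _ _ hadj]
          exact Equivw.refl _
      · by_cases hzv : Γ.Adj z v
        · by_cases hzu2 : Γ.Adj z u
          · rw [act_cons_adj _ _ _ hzv, act_cons_adj _ _ _ hzu2,
              act_cons_adj _ _ _ hzu2, act_cons_adj _ _ _ hzv]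
            exact Equivw.cons _ (ih ht)
          · rw [act_cons_adj _ _ _ hzv, act_cons_far (G := G) _ _ _ hzu hzu2,
              act_cons_far (G := G) _ _ _ hzu hzu2]
            by_cases hg : g = 1
            · simp only [if_pos hg]
              rw [act_cons_adj _ _ _ hzv]
              exact Equivw.refl _
            · simp only [if_neg hg]
              rw [act_cons_adj _ _ _ hadj, act_cons_adj _ _ _ hzv]
              exact Equivw.refl _
        · by_cases hzu2 : Γ.Adj z u
          · rw [act_cons_far (G := G) _ _ _ hz hzv, act_cons_adj _ _ _ hzu2,
              act_cons_far (G := G) _ _ _ hz hzv]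
            by_cases h1 : h = 1
            · simp only [if_pos h1]
              rw [act_cons_adj _ _ _ hzu2]
              exact Equivw.refl _
            · simp only [if_neg h1]
              rw [act_cons_adj _ _ _ hvu, act_cons_adj _ _ _ hzu2]
              exact Equivw.refl _
          · rw [act_cons_far (G := G) _ _ _ hz hzv]
            by_cases h1 : h = 1
            · subst h1
              simp only [if_pos rfl]
              rw [act_one (fun l hl => (red_act g hw).1 l hl)]
              exact Equivw.refl _
            · simp only [if_neg h1]
              rw [act_cons_adj _ _ _ hvu, act_cons_far (G := G) _ _ _ hzu hzu2]
              by_cases hg : g = 1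
              · simp only [if_pos hg]
                rw [act_cons_far (G := G) _ _ _ hz hzv]
                simp only [if_neg h1]
                exact Equivw.refl _
              · simp only [if_neg hg]
                rw [act_cons_adj _ _ _ hadj, act_cons_far (G := G) _ _ _ hz hzv]
                simp only [if_neg h1]
                exact Step.equiv (step_swap (x := ⟨v, h⟩) (y := ⟨u, g⟩) hvu _)

theorem act_step {v : V} (g : G v) {w w' : List (Σ u : V, G u)} (h : Step Γ w w') :
    Equivw Γ (act Γ v g w) (act Γ v g w') := by
  classical
  obtain ⟨p, x, y, q, hadj, h1, h2⟩ := h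
  subst h1 h2
  induction p with
  | cons z p ih =>
    obtain ⟨uz, az⟩ := z
    have hstep : Step Γ (p ++ x :: y :: q) (p ++ y :: x :: q) := ⟨p, x, y, q, hadj, rfl, rfl⟩
    by_cases hz : uz = v
    · subst hz
      rw [List.cons_append, List.cons_append, act_cons_eq, act_cons_eq]
      split_ifs
      · exact hstep.equiv
      · exact Equivw.cons _ hstep.equiv
    · by_cases hza : Γ.Adj uz v
      · rw [List.cons_append, List.cons_append, act_cons_adj _ _ _ hza,
          act_cons_adj _ _ _ hza]
        exact Equivw.cons _ ih
      · rw [List.cons_append, List.cons_append, act_cons_far _ _ _ hz hza,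
          act_cons_far _ _ _ hz hza]
        split_ifs
        · exact (hstep.cons _).equiv
        · exact Equivw.cons _ (hstep.cons _).equiv
  | nil =>
    obtain ⟨ux, ax⟩ := x
    obtain ⟨uy, ay⟩ := y
    simp only [List.nil_append]
    have hxy : Γ.Adj ux uy := hadj
    have hyx : Γ.Adj uy ux := Γ.adj_symm hxy
    by_cases hx : ux = v
    · subst hx
      have hyadj : Γ.Adj uy ux := hyx
      rw [act_cons_adj _ _ _ hyadj, act_cons_eq, act_cons_eq]
      by_cases hc : g * ax = 1
      · simp only [if_pos hc]; exact Equivw.refl _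
      · simp only [if_neg hc]
        exact Step.equiv (step_swap (x := ⟨ux, g * ax⟩) (y := ⟨uy, ay⟩) hxy q)
    · by_cases hy : uy = v
      · subst hy
        rw [act_cons_adj _ _ _ hxy, act_cons_eq, act_cons_eq]
        by_cases hc : g * ay = 1
        · simp only [if_pos hc]; exact Equivw.refl _
        · simp only [if_neg hc]
          exact Step.equiv (step_swap (x := ⟨ux, ax⟩) (y := ⟨uy, g * ay⟩) hxy q)
      · by_cases hxa : Γ.Adj ux v
        · by_cases hya : Γ.Adj uy v
          · rw [act_cons_adj _ _ _ hxa, act_cons_adj _ _ _ hya,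
              act_cons_adj _ _ _ hya, act_cons_adj _ _ _ hxa]
            exact Step.equiv (step_swap (x := ⟨ux, ax⟩) (y := ⟨uy, ay⟩) hxy _)
          · rw [act_cons_adj _ _ _ hxa, act_cons_far (G := G) _ _ _ hy hya,
              act_cons_far (G := G) _ _ _ hy hya]
            by_cases hg : g = 1
            · simp only [if_pos hg]
              exact Step.equiv (step_swap (x := ⟨ux, ax⟩) (y := ⟨uy, ay⟩) hxy _)
            · simp only [if_neg hg]
              refine Equivw.trans
                (Step.equiv (step_swap (x := ⟨ux, ax⟩) (y := ⟨v, g⟩) hxa _)) ?_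
              exact Equivw.cons _
                (Step.equiv (step_swap (x := ⟨ux, ax⟩) (y := ⟨uy, ay⟩) hxy _))
        · by_cases hya : Γ.Adj uy v
          · rw [act_cons_far (G := G) _ _ _ hx hxa, act_cons_adj _ _ _ hya,
              act_cons_far (G := G) _ _ _ hx hxa]
            by_cases hg : g = 1
            · simp only [if_pos hg]
              exact Step.equiv (step_swap (x := ⟨ux, ax⟩) (y := ⟨uy, ay⟩) hxy _)
            · simp only [if_neg hg]
              refine Equivw.trans ?_ (Equivw.symm
                (Step.equiv (step_swap (x := ⟨uy, ay⟩) (y := ⟨v, g⟩) hya _)))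
              exact Equivw.cons _
                (Step.equiv (step_swap (x := ⟨ux, ax⟩) (y := ⟨uy, ay⟩) hxy _))
          · rw [act_cons_far (G := G) _ _ _ hx hxa, act_cons_far (G := G) _ _ _ hy hya]
            by_cases hg : g = 1
            · simp only [if_pos hg]
              exact Step.equiv (step_swap (x := ⟨ux, ax⟩) (y := ⟨uy, ay⟩) hxy _)
            · simp only [if_neg hg]
              exact Equivw.cons _
                (Step.equiv (step_swap (x := ⟨ux, ax⟩) (y := ⟨uy, ay⟩) hxy _))

theorem act_equivw {v : V} (g : G v) {w w' : List (Σ u : V, G u)}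
    (h : Equivw Γ w w') : Equivw Γ (act Γ v g w) (act Γ v g w') := by
  induction h with
  | refl => exact Equivw.refl _
  | tail _ hst ih => exact ih.trans (act_step g hst)

end Machinery4

section Machinery5
variable (Γ : SimpleGraph V) (G : V → Type uG) [∀ v, Group (G v)]

/-- The type of reduced words. -/
def RW : Type (max u uG) := {w : List (Σ u : V, G u) // Red Γ G w}

instance rwSetoid : Setoid (RW Γ G) where
  r w w' := Equivw Γ w.1 w'.1
  iseqv := ⟨fun w => Equivw.refl w.1, Equivw.symm, Equivw.trans⟩

/-- Shuffle classes of reduced words. -/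
def NF : Type (max u uG) := Quotient (rwSetoid Γ G)

variable {Γ G}

noncomputable def actS (v : V) (g : G v) : NF Γ G → NF Γ G :=
  Quotient.map (fun w => ⟨act Γ v g w.1, red_act g w.2⟩)
    (fun _ _ hab => act_equivw g hab)

theorem actS_mk (v : V) (g : G v) (w : RW Γ G) :
    actS v g (⟦w⟧ : NF Γ G) = ⟦(⟨act Γ v g w.1, red_act g w.2⟩ : RW Γ G)⟧ := rfl

theorem actS_one (v : V) (x : NF Γ G) : actS v (1 : G v) x = x := by
  induction x using Quotient.ind with
  | _ w =>
    rw [actS_mk]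
    exact Quotient.sound (show Equivw Γ (act Γ v 1 w.1) w.1 by
      rw [act_one (fun l hl => w.2.1 l hl)]; exact Equivw.refl _)

theorem actS_mul (v : V) (g h : G v) (x : NF Γ G) :
    actS v g (actS v h x) = actS v (g * h) x := by
  induction x using Quotient.ind with
  | _ w =>
    exact Quotient.sound (act_mul g h w.2)

/-- The action of the vertex group `G v` on shuffle classes of reduced words. -/
noncomputable def phi (v : V) : G v →* Equiv.Perm (NF Γ G) where
  toFun g :=
    { toFun := actS v g
      invFun := actS v g⁻¹
      left_inv := fun x => by rw [actS_mul, inv_mul_cancel, actS_one]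
      right_inv := fun x => by rw [actS_mul, mul_inv_cancel, actS_one] }
  map_one' := by ext x; exact actS_one v x
  map_mul' g h := by ext x; exact (actS_mul v g h x).symm

theorem phi_commute {v w : V} (hadj : Γ.Adj v w) (g : G v) (k : G w) :
    Commute (phi (Γ := Γ) v g) (phi w k) := by
  apply Equiv.ext
  intro x
  induction x using Quotient.ind with
  | _ u =>
    show actS v g (actS w k (⟦u⟧ : NF Γ G)) = actS w k (actS v g (⟦u⟧ : NF Γ G))
    exact Quotient.sound (act_comm hadj g k u.2)

variable (Γ G) in
/-- The graph product acts on shuffle classes of reduced words. -/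
noncomputable def Phi : GraphProduct Γ G →* Equiv.Perm (NF Γ G) :=
  QuotientGroup.lift _ (CoprodI.lift (phi (Γ := Γ))) (by
    intro x hx
    refine Subgroup.normalClosure_le_normal ?_ hx
    rintro y ⟨v, w, hadj, g, k, rfl⟩
    have : (CoprodI.lift (phi (Γ := Γ) (G := G))) (CoprodI.of g * CoprodI.of k *
        (CoprodI.of g)⁻¹ * (CoprodI.of k)⁻¹) = 1 := by
      simp only [map_mul, map_inv, CoprodI.lift_of]
      have := (phi_commute hadj g k).commutator_eq
      rwa [commutatorElement_def] at this
    exact this)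

theorem Phi_of {v : V} (g : G v) : Phi Γ G (of Γ G g) = phi v g := by
  have h1 : Phi Γ G (of Γ G g) = (CoprodI.lift (phi (Γ := Γ))) (CoprodI.of g) := rfl
  rw [h1, CoprodI.lift_of]

/-- The class of the empty word. -/
def nfOne : NF Γ G := ⟦⟨[], red_nil⟩⟧

theorem Phi_prodW {w : List (Σ u : V, G u)} (hw : Red Γ G w) :
    Phi Γ G (prodW Γ G w) nfOne = ⟦⟨w, hw⟩⟧ := by
  induction w with
  | nil => rw [prodW_nil, map_one]; rfl
  | cons x t ih =>
    obtain ⟨hx1, hre, ht⟩ := red_cons.1 hw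
    rw [prodW_cons, map_mul]
    show Phi Γ G (of Γ G x.2) (Phi Γ G (prodW Γ G t) nfOne) = _
    rw [ih ht, Phi_of]
    show actS x.1 x.2 (⟦(⟨t, ht⟩ : RW Γ G)⟧ : NF Γ G) = (⟦(⟨x :: t, hw⟩ : RW Γ G)⟧ : NF Γ G)
    refine Quotient.sound ?_
    show Equivw Γ (act Γ x.1 x.2 t) (x :: t)
    have := act_insert (Γ := Γ) hx1 t hre
    simpa using this

/-- **Normal form theorem**: reduced words representing the same element of the
graph product are shuffle equivalent. -/
theorem normal_form {w w' : List (Σ u : V, G u)} (hw : Red Γ G w) (hw' : Red Γ G w')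
    (h : prodW Γ G w = prodW Γ G w') : Equivw Γ w w' := by
  have h1 := Phi_prodW hw
  have h2 := Phi_prodW hw'
  rw [h, h2] at h1
  exact Equivw.symm (Quotient.exact h1)

end Machinery5

section Machinery6
variable {Γ : SimpleGraph V} {G : V → Type uG} [∀ v, Group (G v)]

theorem map_split {w : List (Σ u : V, G u)} {A C : List V} {v : V}
    (h : w.map Sigma.fst = A ++ v :: C) :
    ∃ a y c, w = a ++ y :: c ∧ a.map Sigma.fst = A ∧ y.1 = v ∧ c.map Sigma.fst = C := by
  induction w generalizing A with
  | nil => rcases A with _ | ⟨a0, A'⟩ <;> simp at h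
  | cons x t ih =>
    rcases A with _ | ⟨a0, A'⟩
    · rw [List.map_cons, List.nil_append] at h
      obtain ⟨h1, h2⟩ := List.cons.injEq _ _ _ _ ▸ h
      exact ⟨[], x, t, rfl, rfl, h1, h2⟩
    · rw [List.map_cons, List.cons_append] at h
      obtain ⟨h1, h2⟩ := List.cons.injEq _ _ _ _ ▸ h
      obtain ⟨a, y, c, rfl, ha, hy, hc⟩ := ih h2
      exact ⟨x :: a, y, c, rfl, by simp [h1, ha], hy, hc⟩

theorem bad_pullback {w : List (Σ u : V, G u)} (h : BadV Γ (w.map Sigma.fst)) :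
    ∃ (a : List (Σ u : V, G u))
      (x : (Σ u : V, G u)) (b : List (Σ u : V, G u)) (y : (Σ u : V, G u))
      (c : List (Σ u : V, G u)),
      w = a ++ x :: (b ++ y :: c) ∧ y.1 = x.1 ∧ ∀ z ∈ b, Γ.Adj z.1 x.1 := by
  obtain ⟨A, v, B, C, hh, hB⟩ := h
  obtain ⟨a, x, r, rfl, hA, hx, hr⟩ := map_split hh
  obtain ⟨b, y, c, rfl, hb, hy, hc⟩ := map_split hr
  refine ⟨a, x, b, y, c, rfl, by rw [hy, hx], ?_⟩
  intro z hz
  rw [hx]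
  exact hB z.1 (hb ▸ List.mem_map_of_mem (f := Sigma.fst) hz)

theorem comm_prod {v : V} (g : G v) (b : List (Σ u : V, G u))
    (hb : ∀ z ∈ b, Γ.Adj z.1 v) :
    Commute (of Γ G g) (prodW Γ G b) := by
  induction b with
  | nil => simp [Commute.one_right]
  | cons z t ih =>
    rw [prodW_cons]
    exact Commute.mul_right ((of_commute Γ G (hb z (by simp)) z.2 g).symm)
      (ih (fun z hz => hb z (by simp [hz])))

theorem prod_merge {v : V} (g h : G v) (a b c : List (Σ u : V, G u))
    (hb : ∀ z ∈ b, Γ.Adj z.1 v) :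
    prodW Γ G (a ++ ⟨v, g⟩ :: (b ++ ⟨v, h⟩ :: c)) =
      prodW Γ G (a ++ b ++ ⟨v, g * h⟩ :: c) := by
  have key : of Γ G g * prodW Γ G b = prodW Γ G b * of Γ G g :=
    (comm_prod g b hb).eq
  simp only [prodW_append, prodW_cons, map_mul, ← mul_assoc]
  rw [mul_assoc (prodW Γ G a), key, ← mul_assoc]

/-- Every word can be replaced by a reduced word with the same product, at most as
long. -/
theorem exists_red (w : List (Σ u : V, G u)) :
    ∃ w', Red Γ G w' ∧ prodW Γ G w' = prodW Γ G w ∧ w'.length ≤ w.length := by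
  classical
  suffices H : ∀ n (w : List (Σ u : V, G u)), w.length ≤ n →
      ∃ w', Red Γ G w' ∧ prodW Γ G w' = prodW Γ G w ∧ w'.length ≤ w.length from
    H w.length w le_rfl
  intro n
  induction n with
  | zero =>
    intro w hw
    rw [List.length_eq_zero_iff.1 (Nat.le_zero.1 hw)]
    exact ⟨[], red_nil, rfl, le_rfl⟩
  | succ n ih =>
    intro w hw
    by_cases h1 : ∀ l ∈ w, l.2 ≠ 1
    · by_cases h2 : BadV Γ (w.map Sigma.fst)
      · obtain ⟨a, x, b, y, c, rfl, hyx, hb⟩ := bad_pullback h2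
        obtain ⟨vx, gx⟩ := x
        obtain ⟨vy, gy⟩ := y
        obtain rfl : vy = vx := hyx
        have hprod := prod_merge (Γ := Γ) gx gy a b c hb
        have hlen : (a ++ b ++ ⟨vy, gx * gy⟩ :: c).length + 1 =
            (a ++ ⟨vy, gx⟩ :: (b ++ ⟨vy, gy⟩ :: c)).length := by
          simp; omega
        obtain ⟨w', hr, hp, hl⟩ := ih (a ++ b ++ ⟨vy, gx * gy⟩ :: c) (by omega)
        exact ⟨w', hr, by rw [hp, ← hprod], by omega⟩
      · exact ⟨w, ⟨h1, h2⟩, rfl, le_rfl⟩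
    · push_neg at h1
      obtain ⟨l, hl, hl1⟩ := h1
      obtain ⟨s, t, rfl⟩ := List.append_of_mem hl
      have hprod : prodW Γ G (s ++ t) = prodW Γ G (s ++ l :: t) := by
        rw [prodW_append, prodW_append, prodW_cons, hl1, map_one, one_mul]
      have hlen : (s ++ t).length + 1 = (s ++ l :: t).length := by
        simp only [List.length_append, List.length_cons]; omega
      obtain ⟨w', hr, hp, hl'⟩ := ih (s ++ t) (by omega)
      exact ⟨w', hr, by rw [hp, hprod], by omega⟩

/-- A minimal-length word is reduced. -/
theorem isReducedWord_red {g : GraphProduct Γ G} {w : List (Σ v : V, G v)}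
    (hw : IsReducedWord Γ G g w) : Red Γ G w := by
  refine ⟨hw.2.1, fun hbad => ?_⟩
  obtain ⟨a, x, b, y, c, hdec, hyx, hb⟩ := bad_pullback hbad
  obtain ⟨vx, gx⟩ := x
  obtain ⟨vy, gy⟩ := y
  obtain rfl : vy = vx := hyx
  subst hdec
  have hprod := prod_merge (Γ := Γ) gx gy a b c hb
  have hmin := hw.2.2 (a ++ b ++ ⟨vy, gx * gy⟩ :: c)
    (by rw [show ((a ++ b ++ ⟨vy, gx * gy⟩ :: c).map fun l => of Γ G l.2).prod =
          prodW Γ G (a ++ b ++ ⟨vy, gx * gy⟩ :: c) from rfl, ← hprod]; exact hw.1)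
  simp only [List.length_append, List.length_cons] at hmin
  omega

end Machinery6

/-- The map `γ : G_Γ → W_Γ` replacing each letter of a reduced word by
the corresponding right-angled Coxeter generator is well defined ((a): independent of the
choice of reduced word) and length preserving ((b): the image of a reduced word of length
`k` is a word of minimal length `k` in the Coxeter generators). -/
theorem gamma_well_defined_and_reduced {V : Type u} [Finite V] (Γ : SimpleGraph V)
    (G : V → Type uG) [∀ v, Group (G v)] [∀ v, Nontrivial (G v)]
    (gen : ∀ v, G v) (hgen : ∀ v, Subgroup.zpowers (gen v) = ⊤)
    (g : GraphProduct Γ G) (w w' : List (Σ v : V, G v))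
    (hw : IsReducedWord Γ G g w) (hw' : IsReducedWord Γ G g w') :
    ((w.map fun l => of Γ (fun _ : V => Multiplicative (ZMod 2)) (v := l.1)
        (Multiplicative.ofAdd (1 : ZMod 2))).prod =
      (w'.map fun l => of Γ (fun _ : V => Multiplicative (ZMod 2)) (v := l.1)
        (Multiplicative.ofAdd (1 : ZMod 2))).prod) ∧
    ∀ ws : List V,
      ((ws.map fun u => of Γ (fun _ : V => Multiplicative (ZMod 2)) (v := u)
          (Multiplicative.ofAdd (1 : ZMod 2))).prod =
        (w.map fun l => of Γ (fun _ : V => Multiplicative (ZMod 2)) (v := l.1)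
          (Multiplicative.ofAdd (1 : ZMod 2))).prod) →
      w.length ≤ ws.length := by
  classical
  have hwr : Red Γ G w := isReducedWord_red hw
  have hwr' : Red Γ G w' := isReducedWord_red hw'
  have hequiv : Equivw Γ w w' := normal_form hwr hwr' (hw.1.trans hw'.1.symm)
  constructor
  · exact hequiv.map_prod_eq
      (fun l => of Γ (fun _ : V => Multiplicative (ZMod 2)) (v := l.1)
        (Multiplicative.ofAdd (1 : ZMod 2)))
      (fun x y hadj => of_commute Γ _ hadj _ _)
  · intro ws hws
    set σ : Multiplicative (ZMod 2) := Multiplicative.ofAdd (1 : ZMod 2) with hσdef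
    have hσ : σ ≠ 1 := by decide
    set WW : V → Type := fun _ : V => Multiplicative (ZMod 2) with hWW
    set wbar : List (Σ v : V, WW v) := w.map (fun l => ⟨l.1, σ⟩) with hwbar
    set w₂ : List (Σ v : V, WW v) := ws.map (fun u => ⟨u, σ⟩) with hw₂
    have hredbar : Red Γ WW wbar := by
      constructor
      · intro l hl
        rw [hwbar] at hl
        obtain ⟨l', -, rfl⟩ := List.mem_map.1 hl
        exact hσ
      · have hfst : wbar.map Sigma.fst = w.map Sigma.fst := by
          rw [hwbar, List.map_map]; rfl
        rw [hfst]
        exact hwr.2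
    have hpbar : prodW Γ WW wbar =
        (w.map fun l => of Γ WW (v := l.1) σ).prod := by
      rw [hwbar, prodW, List.map_map]; rfl
    have hp₂ : prodW Γ WW w₂ = (ws.map fun u => of Γ WW (v := u) σ).prod := by
      rw [hw₂, prodW, List.map_map]; rfl
    obtain ⟨w₃, h₃red, h₃prod, h₃len⟩ := exists_red (Γ := Γ) (G := WW) w₂
    have hpp : prodW Γ WW wbar = prodW Γ WW w₃ := by
      rw [hpbar, h₃prod, hp₂, hws]
    have heq := normal_form hredbar h₃red hpp
    have hlen := heq.length_eq
    have h1 : wbar.length = w.length := by rw [hwbar, List.length_map]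
    have h2 : w₂.length = ws.length := by rw [hw₂, List.length_map]
    omega

end ArXiv
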